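/- Scale invariance of the comparison (Corollary to Lemmas 2-6): suppose f̂ > 0 and ĝ > 0 satisfy f̂/ĝ = (f̄ - f_)/ϑ̄, and define π̂(x) = -(f(x) + 1{ϑ(x)>0}·f̂ + (f̂/(ξ·ĝ))·θ(x)). Then for all x₁, x₂ ∈ S, sign(π̂(x₁) - π̂(x₂)) = sign(π(x₁) - π(x₂)), where π is the original function built with f̄ - f_ and ϑ̄. -/

import Mathlib

theorem stmt_10 {S : Type*} (f ϑ : S → ℝ) (fb fl tb ξ fh gh : ℝ)
    (hf : fl < fb) (htb : 0 < tb) (hξ0 : 0 < ξ) (hξ1 : ξ ≤ 1)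
    (hfh : 0 < fh) (hgh : 0 < gh) (hratio : fh * tb = gh * (fb - fl))
    (hflo : ∀ x, fl ≤ f x) (hfhi : ∀ x, f x ≤ fb)
    (hlo : ∀ x, 0 ≤ ϑ x) (hhi : ∀ x, ϑ x ≤ tb)
    (θ π πh : S → ℝ)
    (hθ : ∀ x, θ x = if ϑ x = 0 then -tb else ϑ x)
    (hπ : ∀ x, π x = -(f x + ((if 0 < ϑ x then fb - fl else 0) + ((fb - fl) / (ξ * tb)) * θ x)))
    (hπh : ∀ x, πh x = -(f x + ((if 0 < ϑ x then fh else 0) + (fh / (ξ * gh)) * θ x))) :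
    ∀ x₁ x₂ : S, Real.sign (πh x₁ - πh x₂) = Real.sign (π x₁ - π x₂) := by
  have hcoef : fh / (ξ * gh) = (fb - fl) / (ξ * tb) := by
    field_simp
    nlinarith [hratio]
  set c : ℝ := (fb - fl) / (ξ * tb) with hc
  have hcpos : 0 < c := by
    apply div_pos (by linarith) (by positivity)
  have hctb : c * tb = (fb - fl) / ξ := by
    field_simp [hc]
    rw [hc, div_mul_eq_mul_div, div_mul_eq_mul_div, div_eq_iff (by positivity)]
    ring
  have hge : (fb - fl) / ξ ≥ fb - fl := by
    rw [ge_iff_le, le_div_iff₀ hξ0]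
    nlinarith
  -- key negativity lemma
  have key : ∀ d : ℝ, 0 < d → ∀ x₁ x₂ : S, 0 < ϑ x₁ → ¬ 0 < ϑ x₂ →
      -(f x₁ + (d + c * θ x₁)) - -(f x₂ + (0 + c * θ x₂)) < 0 := by
    intro d hd x₁ x₂ h1 h2
    have hz2 : ϑ x₂ = 0 := le_antisymm (not_lt.mp h2) (hlo x₂)
    have hθ1 : θ x₁ = ϑ x₁ := by rw [hθ]; simp [ne_of_gt h1]
    have hθ2 : θ x₂ = -tb := by rw [hθ]; simp [hz2]
    rw [hθ1, hθ2]
    have h3 : fl ≤ f x₁ := hflo x₁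
    have h4 : f x₂ ≤ fb := hfhi x₂
    have h5 : c * ϑ x₁ > 0 := mul_pos hcpos h1
    nlinarith [hctb, hge]
  intro x₁ x₂
  by_cases h1 : 0 < ϑ x₁ <;> by_cases h2 : 0 < ϑ x₂
  · have : πh x₁ - πh x₂ = π x₁ - π x₂ := by
      rw [hπ, hπ, hπh, hπh, hcoef]; simp only [if_pos h1, if_pos h2]; ring
    rw [this]
  · have hn1 : πh x₁ - πh x₂ < 0 := by
      rw [hπh, hπh, hcoef]; simp only [if_pos h1, if_neg h2]
      exact key fh hfh x₁ x₂ h1 h2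
    have hn2 : π x₁ - π x₂ < 0 := by
      rw [hπ, hπ]; simp only [if_pos h1, if_neg h2]
      exact key (fb - fl) (by linarith) x₁ x₂ h1 h2
    rw [Real.sign_of_neg hn1, Real.sign_of_neg hn2]
  · have hn1 : πh x₂ - πh x₁ < 0 := by
      rw [hπh, hπh, hcoef]; simp only [if_pos h2, if_neg h1]
      exact key fh hfh x₂ x₁ h2 h1
    have hn2 : π x₂ - π x₁ < 0 := by
      rw [hπ, hπ]; simp only [if_pos h2, if_neg h1]
      exact key (fb - fl) (by linarith) x₂ x₁ h2 h1
    rw [Real.sign_of_pos (by linarith : 0 < πh x₁ - πh x₂),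
        Real.sign_of_pos (by linarith : 0 < π x₁ - π x₂)]
  · have : πh x₁ - πh x₂ = π x₁ - π x₂ := by
      rw [hπ, hπ, hπh, hπh, hcoef]; simp only [if_neg h1, if_neg h2]
    rw [this]
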